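/- arXiv:1305.2551 — 2 statements merged into one kernel-verified Lean document; each statement's English description precedes it below -/
import Mathlib

section
/- Let A = S/I be a monomial Artinian K-algebra whose monomial poset M(A) has the LYM property, and let p > 0 be an integer with dim_K A_p > dim_K A_k for all k < p. Then the ideal I + m^p has the strong Rees property: for every homogeneous ideal J strictly containing I + m^p, μ(J) < μ(I + m^p). -/
open MvPolynomial Pointwise

/-- The minimal number of generators of an ideal. -/
noncomputable def mu {R : Type*} [CommRing R] (I : Ideal R) : ℕ :=
  sInf {k | ∃ s : Finset R, s.card = k ∧ Ideal.span (s : Set R) = I}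

/-- The graded maximal ideal `(x₁, …, xₙ)` of `K[x₁, …, xₙ]`. -/
noncomputable def mm (K : Type*) [Field K] (n : ℕ) : Ideal (MvPolynomial (Fin n) K) :=
  Ideal.span (Set.range X)

/-- `I` is `m`-full: `mI : y = I` for some `y ∈ m`. -/
def IsMFull {R : Type*} [CommRing R] (m I : Ideal R) : Prop :=
  ∃ y ∈ m, (m * I).colon (Ideal.span {y}) = I

/-- A homogeneous ideal: one containing all homogeneous components of its elements. -/
def IsHomog {K : Type*} [Field K] {n : ℕ} (I : Ideal (MvPolynomial (Fin n) K)) : Prop :=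
  ∀ f ∈ I, ∀ k : ℕ, homogeneousComponent k f ∈ I

/-- `dim_K (S/I)_k`, the dimension of the degree `k` part of `S/I`. -/
noncomputable def hdim (K : Type*) [Field K] (n : ℕ)
    (I : Ideal (MvPolynomial (Fin n) K)) (k : ℕ) : ℕ :=
  Module.finrank K (Submodule.map (Ideal.Quotient.mkₐ K I).toLinearMap
    (homogeneousSubmodule (Fin n) K k))

/-- The total degree of an exponent vector. -/
def mdeg {n : ℕ} (d : Fin n →₀ ℕ) : ℕ := d.sum fun _ e => e

/-- `M_k(S/I)`: the exponent vectors of degree `k` monomials not in `I`. -/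
def MSet (K : Type*) [Field K] {n : ℕ} (I : Ideal (MvPolynomial (Fin n) K)) (k : ℕ) :
    Set (Fin n →₀ ℕ) := {d | mdeg d = k ∧ (monomial d (1 : K)) ∉ I}

/-- `I` is a monomial ideal. -/
def IsMonomialIdeal {K : Type*} [Field K] {n : ℕ} (I : Ideal (MvPolynomial (Fin n) K)) : Prop :=
  ∀ f ∈ I, ∀ d ∈ f.support, (monomial d (1 : K)) ∈ I

/-- The LYM property of the divisibility poset of monomials outside `I`,
ranked by degree.  (Divisibility of monomials is the pointwise order `≤` on
exponent vectors.) -/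
def MLYM (K : Type*) [Field K] {n : ℕ} (I : Ideal (MvPolynomial (Fin n) K)) : Prop :=
  ∀ F : Finset (Fin n →₀ ℕ), (∀ d ∈ F, (monomial d (1 : K)) ∉ I) →
    IsAntichain (· ≤ ·) (F : Set (Fin n →₀ ℕ)) →
    ∑ d ∈ F, (1 : ℚ) / (MSet K I (mdeg d)).ncard ≤ 1

/-- The Sperner property of the Artinian algebra `S/I`:
the maximal number of generators of an ideal of `S/I` equals the maximal
value of the Hilbert function of `S/I`. -/
def SpernerAlg {K : Type*} [Field K] {n : ℕ} (I : Ideal (MvPolynomial (Fin n) K)) : Prop :=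
  sSup {m | ∃ J : Ideal (MvPolynomial (Fin n) K ⧸ I), mu J = m}
    = sSup (Set.range (hdim K n I))

section Aux

variable {K : Type*} [Field K] {n : ℕ}

/-! ### degree basics -/

lemma mdeg_degree (d : Fin n →₀ ℕ) : mdeg d = d.degree := rfl

lemma mdeg_add (a b : Fin n →₀ ℕ) : mdeg (a + b) = mdeg a + mdeg b := by
  simp [mdeg_degree, Finsupp.degree_eq_weight_one, map_add]

lemma mdeg_single (i : Fin n) (k : ℕ) : mdeg (Finsupp.single i k) = k := by
  simp [mdeg, Finsupp.sum_single_index]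

lemma mdeg_eq_zero {d : Fin n →₀ ℕ} : mdeg d = 0 ↔ d = 0 := by
  simp [mdeg_degree, Finsupp.degree_eq_zero_iff]

lemma mdeg_tsub {a b : Fin n →₀ ℕ} (h : b ≤ a) : mdeg (a - b) = mdeg a - mdeg b := by
  have h2 : a - b + b = a := tsub_add_cancel_of_le h
  have h3 : mdeg (a - b) + mdeg b = mdeg a := by rw [← mdeg_add, h2]
  omega

lemma finite_mdeg_le (k : ℕ) : {d : Fin n →₀ ℕ | mdeg d ≤ k}.Finite := by
  simpa [mdeg_degree] using Finsupp.finite_of_degree_le (σ := Fin n) k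

lemma finite_mdeg_eq (k : ℕ) : {d : Fin n →₀ ℕ | mdeg d = k}.Finite :=
  (finite_mdeg_le k).subset fun d hd => le_of_eq hd

lemma isHomog_iff_supp {f : MvPolynomial (Fin n) K} {k : ℕ} :
    f.IsHomogeneous k ↔ ∀ d ∈ f.support, mdeg d = k := by
  constructor
  · intro h d hd
    have := h (mem_support_iff.1 hd)
    rw [mdeg_degree, Finsupp.degree_eq_weight_one]
    exact this
  · intro h d hd
    have := h d (mem_support_iff.2 hd)
    rw [mdeg_degree, Finsupp.degree_eq_weight_one] at this
    exact this

/-! ### monomial ideal basics -/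

lemma monomial_mul_monomial (a b : Fin n →₀ ℕ) :
    (monomial a (1:K)) * monomial b 1 = monomial (a+b) 1 := by
  simp [monomial_mul]

lemma Iexp_up {I : Ideal (MvPolynomial (Fin n) K)} {d e : Fin n →₀ ℕ}
    (hd : monomial d (1:K) ∈ I) (hde : d ≤ e) : monomial e (1:K) ∈ I := by
  have : monomial e (1:K) = monomial (e - d) 1 * monomial d 1 := by
    rw [monomial_mul_monomial, tsub_add_cancel_of_le hde]
  rw [this]; exact Ideal.mul_mem_left _ _ hd

lemma mem_ideal_of_supp {I : Ideal (MvPolynomial (Fin n) K)} {f : MvPolynomial (Fin n) K}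
    (h : ∀ d ∈ f.support, monomial d (1:K) ∈ I) : f ∈ I := by
  rw [f.as_sum]
  refine Submodule.sum_mem _ fun d hd => ?_
  have : monomial d (coeff d f) = C (coeff d f) * monomial d (1:K) := by
    rw [C_mul_monomial, mul_one]
  rw [this]
  exact Ideal.mul_mem_left _ _ (h d hd)

lemma comp_mem_of_monomialIdeal {I : Ideal (MvPolynomial (Fin n) K)} (hmon : IsMonomialIdeal I)
    {f : MvPolynomial (Fin n) K} (hf : f ∈ I) (k : ℕ) : homogeneousComponent k f ∈ I := by
  refine mem_ideal_of_supp fun d hd => hmon f hf d ?_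
  rw [mem_support_iff] at hd ⊢
  rw [coeff_homogeneousComponent] at hd
  intro h0; apply hd; split <;> simp [h0]

/-! ### the maximal ideal -/

lemma X_mem_mm (i : Fin n) : X i ∈ mm K n := Ideal.subset_span ⟨i, rfl⟩

lemma coeff_zero_of_mem_mm {f : MvPolynomial (Fin n) K} (hf : f ∈ mm K n) :
    constantCoeff f = 0 := by
  have h : mm K n ≤ RingHom.ker (constantCoeff (σ := Fin n) (R := K)) := by
    rw [mm, Ideal.span_le]
    rintro x ⟨i, rfl⟩
    simp [RingHom.mem_ker]
  exact h hf

lemma single_le_of_mem_support {d : Fin n →₀ ℕ} {i : Fin n} (hi : i ∈ d.support) :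
    Finsupp.single i 1 ≤ d := by
  intro j
  rcases eq_or_ne j i with rfl | hji
  · simpa [Finsupp.single_eq_same, Nat.one_le_iff_ne_zero] using Finsupp.mem_support_iff.1 hi
  · simp [Finsupp.single_eq_of_ne' (Ne.symm hji)]

lemma monomial_factor {d : Fin n →₀ ℕ} {i : Fin n} (hi : i ∈ d.support) (c : K) :
    monomial d c = monomial (d - Finsupp.single i 1) c * X i := by
  have : (X i : MvPolynomial (Fin n) K) = monomial (Finsupp.single i 1) 1 := rfl
  rw [this, monomial_mul, mul_one, tsub_add_cancel_of_le (single_le_of_mem_support hi)]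

lemma mem_mm_of_coeff_zero {f : MvPolynomial (Fin n) K} (hf : constantCoeff f = 0) :
    f ∈ mm K n := by
  refine mem_ideal_of_supp fun d hd => ?_
  have hd0 : d ≠ 0 := by
    rintro rfl
    rw [mem_support_iff] at hd
    exact hd hf
  obtain ⟨i, hi⟩ := Finsupp.support_nonempty_iff.2 hd0
  rw [monomial_factor hi]
  exact Ideal.mul_mem_left _ _ (X_mem_mm i)

lemma monomial_mem_mm_pow {d : Fin n →₀ ℕ} {p : ℕ} (h : p ≤ mdeg d) :
    monomial d (1:K) ∈ mm K n ^ p := by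
  induction p generalizing d with
  | zero => simp [Ideal.one_eq_top]
  | succ p ih =>
    have hd0 : d ≠ 0 := by
      rintro rfl
      simp [mdeg] at h
    obtain ⟨i, hi⟩ := Finsupp.support_nonempty_iff.2 hd0
    rw [monomial_factor hi, pow_succ]
    refine Ideal.mul_mem_mul (ih ?_) (X_mem_mm i)
    have h1 : mdeg (d - Finsupp.single i 1) = mdeg d - 1 := by
      rw [mdeg_tsub (single_le_of_mem_support hi), mdeg_single]
    omega

lemma homog_mem_mm_pow {f : MvPolynomial (Fin n) K} {k p : ℕ}
    (hf : f.IsHomogeneous k) (h : p ≤ k) : f ∈ mm K n ^ p := by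
  refine mem_ideal_of_supp fun d hd => monomial_mem_mm_pow ?_
  rw [isHomog_iff_supp] at hf
  rw [hf d hd]; exact h

lemma supp_mm_pow {p : ℕ} {f : MvPolynomial (Fin n) K} (hf : f ∈ mm K n ^ p) :
    ∀ d ∈ f.support, p ≤ mdeg d := by
  classical
  induction p generalizing f with
  | zero => intro d _; exact Nat.zero_le _
  | succ p ih =>
    rw [pow_succ] at hf
    refine Submodule.mul_induction_on hf ?_ ?_
    · intro a ha b hb d hd
      have hsupp := support_mul a b hd
      rw [Finset.mem_add] at hsupp
      obtain ⟨da, hda, db, hdb, rfl⟩ := hsupp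
      have h1 : p ≤ mdeg da := ih ha da hda
      have h2 : 1 ≤ mdeg db ∧ p ≤ mdeg da := ⟨by
        have hb0 : db ≠ 0 := by
          rintro rfl
          exact (mem_support_iff.1 hdb) (coeff_zero_of_mem_mm hb)
        exact Nat.one_le_iff_ne_zero.2 fun h0 => hb0 (mdeg_eq_zero.1 h0), h1⟩
      rw [mdeg_add]; omega
    · intro x y hx hy d hd
      have := MvPolynomial.support_add (p := x) (q := y) hd
      rw [Finset.mem_union] at this
      rcases this with h | h
      exacts [hx d h, hy d h]

/-! ### leading monomials -/

noncomputable def lmon (f : MvPolynomial (Fin n) K) : Fin n →₀ ℕ :=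
  ofLex (f.support.sup toLex)

lemma lmon_mem {f : MvPolynomial (Fin n) K} (hf : f ≠ 0) : lmon f ∈ f.support := by
  have hne : f.support.Nonempty := by
    rw [Finset.nonempty_iff_ne_empty, Ne, MvPolynomial.support_eq_empty]
    exact hf
  obtain ⟨b, hb, hsup⟩ := Finset.exists_mem_eq_sup f.support hne toLex
  have : lmon f = b := by rw [lmon, hsup]; rfl
  rw [this]; exact hb

lemma le_lmon {f : MvPolynomial (Fin n) K} {d : Fin n →₀ ℕ} (hd : d ∈ f.support) :
    toLex d ≤ toLex (lmon f) := Finset.le_sup hd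

lemma lmon_eq_of {f : MvPolynomial (Fin n) K} {u : Fin n →₀ ℕ} (hu : u ∈ f.support)
    (h : ∀ d ∈ f.support, toLex d ≤ toLex u) : lmon f = u := by
  have := le_antisymm (Finset.sup_le h) (Finset.le_sup (f := toLex) hu)
  simpa [lmon] using congrArg ofLex this

lemma coeff_lmon {f : MvPolynomial (Fin n) K} (hf : f ≠ 0) : coeff (lmon f) f ≠ 0 :=
  mem_support_iff.1 (lmon_mem hf)

lemma mem_support_monomial_mul {c d : Fin n →₀ ℕ} {f : MvPolynomial (Fin n) K} :
    d ∈ (monomial c (1:K) * f).support ↔ ∃ e ∈ f.support, d = c + e := by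
  rw [mem_support_iff, coeff_monomial_mul']
  constructor
  · intro h
    split at h
    · rename_i hcle
      refine ⟨d - c, ?_, ?_⟩
      · rw [mem_support_iff]; intro h0; apply h; rw [h0, mul_zero]
      · rw [add_comm, tsub_add_cancel_of_le hcle]
    · exact absurd rfl h
  · rintro ⟨e, he, rfl⟩
    rw [if_pos le_self_add]
    have h2 : c + e - c = e := by rw [add_comm, add_tsub_cancel_right]
    rw [h2, one_mul]
    exact mem_support_iff.1 he

lemma lmon_monomial_mul {f : MvPolynomial (Fin n) K} (hf : f ≠ 0) (c : Fin n →₀ ℕ) :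
    lmon (monomial c (1:K) * f) = c + lmon f := by
  refine lmon_eq_of ?_ ?_
  · exact mem_support_monomial_mul.2 ⟨lmon f, lmon_mem hf, rfl⟩
  · intro d hd
    obtain ⟨e, he, rfl⟩ := mem_support_monomial_mul.1 hd
    exact add_le_add_right (le_lmon he) (toLex c)

lemma lmon_monomial {d : Fin n →₀ ℕ} {c : K} (hc : c ≠ 0) : lmon (monomial d c) = d := by
  refine lmon_eq_of ?_ ?_
  · rw [mem_support_iff, coeff_monomial, if_pos rfl]; exact hc
  · intro e he
    rw [mem_support_iff, coeff_monomial] at he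
    rcases eq_or_ne d e with rfl | hde
    · exact le_refl _
    · rw [if_neg hde] at he; exact absurd rfl he

lemma mdeg_lmon {f : MvPolynomial (Fin n) K} {k : ℕ} (h : f.IsHomogeneous k) (hf : f ≠ 0) :
    mdeg (lmon f) = k := (isHomog_iff_supp.1 h) _ (lmon_mem hf)

end Aux

section Graded

variable {K : Type*} [Field K] {n : ℕ}

/-- Leading exponents of nonzero homogeneous degree-`k` elements of `J`. -/
def NN (J : Ideal (MvPolynomial (Fin n) K)) (k : ℕ) : Set (Fin n →₀ ℕ) :=
  {d | ∃ f, f ∈ J ∧ f.IsHomogeneous k ∧ f ≠ 0 ∧ lmon f = d}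

lemma NN_mdeg {J : Ideal (MvPolynomial (Fin n) K)} {k : ℕ} {d : Fin n →₀ ℕ}
    (h : d ∈ NN J k) : mdeg d = k := by
  obtain ⟨f, _, hh, h0, rfl⟩ := h; exact mdeg_lmon hh h0

lemma NN_mult {J : Ideal (MvPolynomial (Fin n) K)} {k l : ℕ} {d w : Fin n →₀ ℕ}
    (hd : d ∈ NN J k) (hw : mdeg w = l) (hdw : d ≤ w) : w ∈ NN J l := by
  obtain ⟨f, hfJ, hfh, hf0, rfl⟩ := hd
  have hdeg : mdeg (w - lmon f) + k = l := by
    have h4 : w - lmon f + lmon f = w := tsub_add_cancel_of_le hdw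
    have h5 := mdeg_add (w - lmon f) (lmon f)
    rw [h4, mdeg_lmon hfh hf0] at h5
    omega
  refine ⟨monomial (w - lmon f) 1 * f, Ideal.mul_mem_left _ _ hfJ, ?_, ?_, ?_⟩
  · have h6 := (isHomogeneous_monomial (1:K)
      (rfl : (w - lmon f).degree = (w - lmon f).degree)).mul hfh
    have h7 : (w - lmon f).degree + k = l := hdeg
    rwa [h7] at h6
  · exact mul_ne_zero (by simp [MvPolynomial.monomial_eq_zero]) hf0
  · rw [lmon_monomial_mul hf0, tsub_add_cancel_of_le hdw]

/-- "New" leading exponents of degree at most `p` : those not obtained from lower degree. -/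
def GS (J : Ideal (MvPolynomial (Fin n) K)) (p : ℕ) : Set (Fin n →₀ ℕ) :=
  {d | mdeg d ≤ p ∧ d ∈ NN J (mdeg d) ∧
    ¬∃ (i : Fin n) (v : Fin n →₀ ℕ), v ∈ NN J (mdeg d - 1) ∧ d = Finsupp.single i 1 + v}

lemma GS_finite (J : Ideal (MvPolynomial (Fin n) K)) (p : ℕ) : (GS J p).Finite :=
  (finite_mdeg_le p).subset fun _ hd => hd.1

/-- A chosen element of `J` realizing a given leading exponent. -/
noncomputable def wit (J : Ideal (MvPolynomial (Fin n) K)) (d : Fin n →₀ ℕ) :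
    MvPolynomial (Fin n) K :=
  letI := Classical.dec (d ∈ NN J (mdeg d))
  if h : d ∈ NN J (mdeg d) then h.choose else 0

lemma wit_spec {J : Ideal (MvPolynomial (Fin n) K)} {d : Fin n →₀ ℕ}
    (h : d ∈ NN J (mdeg d)) :
    wit J d ∈ J ∧ (wit J d).IsHomogeneous (mdeg d) ∧ wit J d ≠ 0 ∧ lmon (wit J d) = d := by
  rw [wit, dif_pos h]
  obtain ⟨h1, h2, h3, h4⟩ := h.choose_spec
  exact ⟨h1, h2, h3, h4⟩

theorem span_wit {p : ℕ} {J : Ideal (MvPolynomial (Fin n) K)} (hJ : IsHomog J)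
    (hmmJ : mm K n ^ p ≤ J) : Ideal.span (wit J '' GS J p) = J := by
  apply le_antisymm
  · rw [Ideal.span_le]; rintro x ⟨d, hd, rfl⟩; exact (wit_spec hd.2.1).1
  · have main : ∀ k : ℕ, ∀ f ∈ J, f.IsHomogeneous k →
        f ∈ Ideal.span (wit J '' GS J p) := by
      intro k
      induction k using Nat.strong_induction_on with
      | _ k ihk =>
        rcases le_or_gt k p with hkp | hkp
        · have inner : ∀ u : Lex (Fin n →₀ ℕ), ∀ f ∈ J, f.IsHomogeneous k → f ≠ 0 →
              toLex (lmon f) = u → f ∈ Ideal.span (wit J '' GS J p) := by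
            intro u
            induction u using WellFoundedLT.induction with
            | _ u ihu =>
              intro f hfJ hfh hf0 hlm
              have hk0 : mdeg (lmon f) = k := mdeg_lmon hfh hf0
              obtain ⟨g, hgJ, hgspan, hgh, hg0, hglm⟩ :
                  ∃ g, g ∈ J ∧ g ∈ Ideal.span (wit J '' GS J p) ∧ g.IsHomogeneous k ∧
                    g ≠ 0 ∧ lmon g = lmon f := by
                by_cases hsh : ∃ (i : Fin n) (v : Fin n →₀ ℕ),
                    v ∈ NN J (mdeg (lmon f) - 1) ∧ lmon f = Finsupp.single i 1 + v
                · obtain ⟨i, v, hv, hveq⟩ := hsh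
                  rw [hk0] at hv
                  have hk1 : 1 ≤ k := by
                    have := congrArg mdeg hveq
                    rw [hk0, mdeg_add, mdeg_single] at this; omega
                  obtain ⟨g', hg'J, hg'h, hg'0, rfl⟩ := hv
                  have hg'span : g' ∈ Ideal.span (wit J '' GS J p) :=
                    ihk (k-1) (by omega) g' hg'J hg'h
                  refine ⟨X i * g', Ideal.mul_mem_left _ _ hg'J,
                    Ideal.mul_mem_left _ _ hg'span, ?_,
                    mul_ne_zero (X_ne_zero i) hg'0, ?_⟩
                  · have := (isHomogeneous_X K i).mul hg'h
                    have heq : 1 + (k-1) = k := by omega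
                    rwa [heq] at this
                  · have hX : (X i : MvPolynomial (Fin n) K) * g'
                        = monomial (Finsupp.single i 1) 1 * g' := rfl
                    rw [hX, lmon_monomial_mul hg'0, ← hveq]
                · have hGS : lmon f ∈ GS J p := by
                    refine ⟨by rw [hk0]; exact hkp, ?_, hsh⟩
                    rw [hk0]; exact ⟨f, hfJ, hfh, hf0, rfl⟩
                  obtain ⟨h1, h2, h3, h4⟩ := wit_spec hGS.2.1
                  rw [hk0] at h2
                  exact ⟨wit J (lmon f), h1, Ideal.subset_span ⟨_, hGS, rfl⟩, h2, h3, h4⟩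
              set c := coeff (lmon f) f / coeff (lmon f) g with hc
              have hgc : coeff (lmon f) g ≠ 0 := by
                rw [← hglm]; exact coeff_lmon hg0
              have hkey : f = (f - C c * g) + C c * g := by ring
              have hcoeff : coeff (lmon f) (f - C c * g) = 0 := by
                rw [coeff_sub, coeff_C_mul, hc, div_mul_cancel₀ _ hgc, sub_self]
              by_cases h0 : f - C c * g = 0
              · rw [hkey, h0, zero_add]; exact Ideal.mul_mem_left _ _ hgspan
              · have hmem : f - C c * g ∈ J :=
                  Submodule.sub_mem _ hfJ (Ideal.mul_mem_left _ _ hgJ)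
                have hhom : (f - C c * g).IsHomogeneous k := by
                  have h1 : (C c * g) = c • g := (smul_eq_C_mul g c).symm
                  rw [h1]
                  exact Submodule.sub_mem (homogeneousSubmodule (Fin n) K k) hfh
                    (Submodule.smul_mem _ c hgh)
                have hlt : toLex (lmon (f - C c * g)) < u := by
                  rw [← hlm]
                  have hsupp : lmon (f - C c * g) ∈ (f - C c * g).support := lmon_mem h0
                  have hsub := MvPolynomial.support_sub (Fin n) f (C c * g) hsupp
                  have hsmul : (C c * g).support ⊆ g.support := by
                    rw [show (C c * g) = c • g from (smul_eq_C_mul g c).symm]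
                    exact Finsupp.support_smul
                  have hle : toLex (lmon (f - C c * g)) ≤ toLex (lmon f) := by
                    rcases Finset.mem_union.1 hsub with h | h
                    · exact le_lmon h
                    · rw [← hglm]
                      exact le_lmon (hsmul h)
                  refine lt_of_le_of_ne hle fun heq => ?_
                  have : lmon (f - C c * g) = lmon f := toLex.injective heq
                  rw [this] at hsupp
                  exact (mem_support_iff.1 hsupp) hcoeff
                have := ihu _ hlt (f - C c * g) hmem hhom h0 rfl
                rw [hkey]
                exact Submodule.add_mem _ this (Ideal.mul_mem_left _ _ hgspan)
          intro f hfJ hfh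
          rcases eq_or_ne f 0 with rfl | hf0
          · exact Submodule.zero_mem _
          · exact inner _ f hfJ hfh hf0 rfl
        · intro f hfJ hfh
          rw [f.as_sum]
          refine Submodule.sum_mem _ fun d hd => ?_
          have hdk : mdeg d = k := isHomog_iff_supp.1 hfh d hd
          have hd0 : d ≠ 0 := by
            rintro rfl
            rw [show mdeg (0 : Fin n →₀ ℕ) = 0 from mdeg_eq_zero.2 rfl] at hdk
            omega
          obtain ⟨i, hi⟩ := Finsupp.support_nonempty_iff.2 hd0
          have hdeg' : mdeg (d - Finsupp.single i 1) = k - 1 := by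
            rw [mdeg_tsub (single_le_of_mem_support hi), mdeg_single, hdk]
          have hmon1 : monomial (d - Finsupp.single i 1) (1:K) ∈ mm K n ^ p :=
            monomial_mem_mm_pow (by omega)
          have hmem : monomial (d - Finsupp.single i 1) (1:K)
              ∈ Ideal.span (wit J '' GS J p) := by
            refine ihk (k-1) (by omega) _ (hmmJ hmon1) ?_
            exact isHomogeneous_monomial 1 hdeg'
          have hfac : monomial d (coeff d f)
              = C (coeff d f) * X i * monomial (d - Finsupp.single i 1) (1:K) := by
            have h1 : (X i : MvPolynomial (Fin n) K) * monomial (d - Finsupp.single i 1) 1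
                = monomial d 1 := by
              have hX : (X i : MvPolynomial (Fin n) K) = monomial (Finsupp.single i 1) 1 := rfl
              rw [hX, monomial_mul_monomial, add_tsub_cancel_of_le (single_le_of_mem_support hi)]
            rw [mul_assoc, h1, C_mul_monomial, mul_one]
          rw [hfac]
          exact Ideal.mul_mem_left _ _ hmem
    intro f hf
    have hdecomp := sum_homogeneousComponent f
    rw [← hdecomp]
    exact Submodule.sum_mem _ fun i _ =>
      main i _ (hJ f hf i) (homogeneousComponent_isHomogeneous i f)

end Graded

section Counting

variable {K : Type*} [Field K] {n : ℕ}

lemma eq_of_le_of_mdeg_eq {u v : Fin n →₀ ℕ} (h : u ≤ v) (hm : mdeg u = mdeg v) : u = v := by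
  have h4 : v - u + u = v := tsub_add_cancel_of_le h
  have h5 := mdeg_add (v - u) u
  rw [h4] at h5
  have h6 : v - u = 0 := mdeg_eq_zero.1 (by omega)
  rw [← h4, h6, zero_add]

lemma exists_coord_lt {u v : Fin n →₀ ℕ} (h : u ≤ v) (hne : u ≠ v) :
    ∃ i, Finsupp.single i 1 ≤ v ∧ u ≤ v - Finsupp.single i 1 := by
  have : ∃ i, u i < v i := by
    by_contra hcon
    push_neg at hcon
    exact hne (le_antisymm h fun i => hcon i)
  obtain ⟨i, hi⟩ := this
  refine ⟨i, ?_, ?_⟩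
  · intro j
    rcases eq_or_ne j i with rfl | hji
    · simp only [Finsupp.single_eq_same]; omega
    · simp [Finsupp.single_eq_of_ne' (Ne.symm hji)]
  · intro j
    rcases eq_or_ne j i with rfl | hji
    · rw [Finsupp.tsub_apply, Finsupp.single_eq_same]; omega
    · rw [Finsupp.tsub_apply, Finsupp.single_eq_of_ne' (Ne.symm hji)]
      exact le_trans (h j) (by omega)

lemma mdeg_sub_single {v : Fin n →₀ ℕ} {i : Fin n} (h : Finsupp.single i 1 ≤ v) :
    mdeg (v - Finsupp.single i 1) = mdeg v - 1 := by
  rw [mdeg_tsub h, mdeg_single]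

lemma antichain_GS {J : Ideal (MvPolynomial (Fin n) K)} {p : ℕ} :
    IsAntichain (· ≤ ·) (GS J p) := by
  intro u hu v hv hne hle
  have hmdeg : mdeg u ≠ mdeg v := fun h => hne (eq_of_le_of_mdeg_eq hle h)
  obtain ⟨i, hsingle, huw⟩ := exists_coord_lt hle hne
  have hmlt : mdeg u < mdeg v := by
    have h1 : mdeg u ≤ mdeg v := by
      have h4 : v - u + u = v := tsub_add_cancel_of_le hle
      have h5 := mdeg_add (v - u) u
      rw [h4] at h5; omega
    omega
  refine hv.2.2 ⟨i, v - Finsupp.single i 1, ?_, (add_tsub_cancel_of_le hsingle).symm⟩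
  exact NN_mult hu.2.1 (by rw [mdeg_sub_single hsingle]) huw

/-- The minimal generator exponents of a monomial ideal. -/
def MinGen (I : Ideal (MvPolynomial (Fin n) K)) : Set (Fin n →₀ ℕ) :=
  {d | monomial d (1:K) ∈ I ∧ ∀ e, e < d → monomial e (1:K) ∉ I}

lemma GS_I_sub {I J : Ideal (MvPolynomial (Fin n) K)} (hmon : IsMonomialIdeal I)
    (hIJ : I ≤ J) {p : ℕ} {d : Fin n →₀ ℕ} (hd : d ∈ GS J p)
    (hdI : monomial d (1:K) ∈ I) : d ∈ MinGen I := by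
  refine ⟨hdI, fun e he heI => ?_⟩
  obtain ⟨i, hsingle, hew⟩ := exists_coord_lt he.le he.ne
  have hwI : monomial (d - Finsupp.single i 1) (1:K) ∈ I := Iexp_up heI hew
  refine hd.2.2 ⟨i, d - Finsupp.single i 1, ?_, (add_tsub_cancel_of_le hsingle).symm⟩
  refine ⟨monomial (d - Finsupp.single i 1) 1, hIJ hwI, ?_, ?_, lmon_monomial one_ne_zero⟩
  · exact isHomogeneous_monomial 1 (by rw [← mdeg_degree, mdeg_sub_single hsingle])
  · simp [MvPolynomial.monomial_eq_zero]

lemma mu_le_card_GS {p : ℕ} {J : Ideal (MvPolynomial (Fin n) K)} (hJ : IsHomog J)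
    (hmmJ : mm K n ^ p ≤ J) : mu J ≤ (GS_finite J p).toFinset.card := by
  classical
  have hspan : Ideal.span (↑((GS_finite J p).toFinset.image (wit J)) :
      Set (MvPolynomial (Fin n) K)) = J := by
    rw [Finset.coe_image, Set.Finite.coe_toFinset]
    exact span_wit hJ hmmJ
  calc mu J ≤ ((GS_finite J p).toFinset.image (wit J)).card :=
        Nat.sInf_le ⟨_, rfl, hspan⟩
  _ ≤ (GS_finite J p).toFinset.card := Finset.card_image_le

lemma exists_low {I J : Ideal (MvPolynomial (Fin n) K)} (hmon : IsMonomialIdeal I)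
    {p : ℕ} (hJ : IsHomog J) (hQJ : I + mm K n ^ p < J) :
    ∃ d ∈ GS J p, monomial d (1:K) ∉ I ∧ mdeg d < p := by
  classical
  have hIJ : I ≤ J := le_trans le_sup_left hQJ.le
  obtain ⟨f, hfJ, hfQ⟩ := SetLike.exists_of_lt hQJ
  have hex : ∃ k, k < p ∧ ∃ g, g ∈ J ∧ g.IsHomogeneous k ∧ g ∉ I := by
    by_contra hcon
    push_neg at hcon
    apply hfQ
    rw [← sum_homogeneousComponent f]
    refine Submodule.sum_mem _ fun i _ => ?_
    rcases lt_or_ge i p with hip | hip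
    · exact Submodule.mem_sup_left
        (hcon i hip _ (hJ f hfJ i) (homogeneousComponent_isHomogeneous i f))
    · exact Submodule.mem_sup_right
        (homog_mem_mm_pow (homogeneousComponent_isHomogeneous i f) hip)
  set k := Nat.find hex with hkdef
  obtain ⟨hkp, g₁, hg₁J, hg₁h, hg₁I⟩ := Nat.find_spec hex
  -- minimize the leading monomial
  have hTne : ∃ u : Lex (Fin n →₀ ℕ),
      ∃ g, (g ∈ J ∧ g.IsHomogeneous k ∧ g ∉ I) ∧ toLex (lmon g) = u :=
    ⟨toLex (lmon g₁), g₁, ⟨hg₁J, hg₁h, hg₁I⟩, rfl⟩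
  have hwf : WellFounded ((· < ·) : Lex (Fin n →₀ ℕ) → Lex (Fin n →₀ ℕ) → Prop) :=
    (inferInstance : WellFoundedLT (Lex (Fin n →₀ ℕ))).wf
  obtain ⟨u, hu, humin⟩ := hwf.has_min
    {u | ∃ g, (g ∈ J ∧ g.IsHomogeneous k ∧ g ∉ I) ∧ toLex (lmon g) = u} hTne
  obtain ⟨g, ⟨hgJ, hgh, hgI⟩, rfl⟩ := hu
  have hg0 : g ≠ 0 := fun h => hgI (h ▸ Submodule.zero_mem I)
  have hmdegu : mdeg (lmon g) = k := mdeg_lmon hgh hg0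
  have huI : monomial (lmon g) (1:K) ∉ I := by
    intro huI
    set c := coeff (lmon g) g with hcdef
    set g' := g - C c * monomial (lmon g) 1 with hg'def
    have hmonid : (C c * monomial (lmon g) (1:K)) = monomial (lmon g) c := by
      rw [C_mul_monomial, mul_one]
    have hg'I : g' ∉ I := by
      intro h
      apply hgI
      have : g = g' + C c * monomial (lmon g) 1 := by rw [hg'def]; ring
      rw [this]
      exact Submodule.add_mem _ h (Ideal.mul_mem_left _ _ huI)
    have hg'0 : g' ≠ 0 := fun h => hg'I (h ▸ Submodule.zero_mem I)
    have hg'J : g' ∈ J :=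
      Submodule.sub_mem _ hgJ (Ideal.mul_mem_left _ _ (hIJ huI))
    have hg'h : g'.IsHomogeneous k := by
      rw [hg'def, hmonid]
      exact Submodule.sub_mem (homogeneousSubmodule (Fin n) K k) hgh
        (isHomogeneous_monomial c (by rw [← mdeg_degree, hmdegu]))
    have hcoeff : coeff (lmon g) g' = 0 := by
      rw [hg'def, coeff_sub, hmonid, coeff_monomial, if_pos rfl, sub_self]
    have hlt : toLex (lmon g') < toLex (lmon g) := by
      have hsupp : lmon g' ∈ g'.support := lmon_mem hg'0
      have hsub := MvPolynomial.support_sub (Fin n) g (C c * monomial (lmon g) 1) (by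
        rw [← hg'def]; exact hsupp)
      have hle : toLex (lmon g') ≤ toLex (lmon g) := by
        rcases Finset.mem_union.1 hsub with h | h
        · exact le_lmon h
        · rw [hmonid] at h
          have := support_monomial_subset h
          rw [Finset.mem_singleton] at this
          rw [this]
      refine lt_of_le_of_ne hle fun heq => ?_
      have heq2 : lmon g' = lmon g := toLex.injective heq
      rw [heq2] at hsupp
      exact (mem_support_iff.1 hsupp) hcoeff
    exact humin _ ⟨g', ⟨hg'J, hg'h, hg'I⟩, rfl⟩ hlt
  refine ⟨lmon g, ⟨by omega, ?_, ?_⟩, huI, by omega⟩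
  · rw [hmdegu]; exact ⟨g, hgJ, hgh, hg0, rfl⟩
  · rintro ⟨i, v, hv, hveq⟩
    rw [hmdegu] at hv
    have hk1 : 1 ≤ k := by
      have := congrArg mdeg hveq
      rw [hmdegu, mdeg_add, mdeg_single] at this; omega
    obtain ⟨g'', hg''J, hg''h, hg''0, rfl⟩ := hv
    have hg''I : g'' ∈ I := by
      by_contra hcon
      exact Nat.find_min hex (m := k - 1) (by omega) ⟨by omega, g'', hg''J, hg''h, hcon⟩
    have hvI : monomial (lmon g'') (1:K) ∈ I := hmon g'' hg''I _ (lmon_mem hg''0)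
    apply huI
    rw [hveq]
    exact Iexp_up hvI le_add_self
end Counting

section DimLYM

variable {K : Type*} [Field K] {n : ℕ}

lemma MSet_finite (I : Ideal (MvPolynomial (Fin n) K)) (k : ℕ) : (MSet K I k).Finite :=
  (finite_mdeg_eq k).subset fun _ hd => hd.1

lemma coeff_combo {ι : Type*} [Fintype ι] (g : ι → K) (dd : ι → (Fin n →₀ ℕ))
    (hinj : Function.Injective dd) (i₀ : ι) :
    coeff (dd i₀) (∑ i, g i • monomial (dd i) (1:K)) = g i₀ := by
  classical
  rw [coeff_sum]
  rw [Finset.sum_eq_single i₀]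
  · rw [coeff_smul, coeff_monomial, if_pos rfl, smul_eq_mul, mul_one]
  · intro b _ hb
    rw [coeff_smul, coeff_monomial, if_neg (fun h => hb (hinj h)), smul_eq_mul, mul_zero]
  · intro h; exact absurd (Finset.mem_univ i₀) h

lemma hdim_eq_ncard {I : Ideal (MvPolynomial (Fin n) K)} (hmon : IsMonomialIdeal I) (k : ℕ) :
    hdim K n I k = (MSet K I k).ncard := by
  classical
  haveI : Fintype ↥(MSet K I k) := (MSet_finite I k).fintype
  set π := (Ideal.Quotient.mkₐ K I).toLinearMap with hπ
  have hπmk : ∀ x, π x = Ideal.Quotient.mk I x := fun x => rfl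
  set b : ↥(MSet K I k) → (MvPolynomial (Fin n) K ⧸ I) :=
    fun d => π (monomial (↑d) 1) with hb
  have hbli : LinearIndependent K b := by
    rw [Fintype.linearIndependent_iff]
    intro g hg i₀
    have hmem : (∑ i : ↥(MSet K I k), g i • monomial ((i : Fin n →₀ ℕ)) (1:K)) ∈ I := by
      rw [← Ideal.Quotient.eq_zero_iff_mem, ← hπmk, map_sum]
      simp only [map_smul]
      exact hg
    by_contra hg0
    have hcoeff : coeff ((i₀ : Fin n →₀ ℕ))
        (∑ i : ↥(MSet K I k), g i • monomial ((i : Fin n →₀ ℕ)) (1:K)) = g i₀ :=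
      coeff_combo g _ Subtype.val_injective i₀
    have hsupp : ((i₀ : Fin n →₀ ℕ)) ∈
        (∑ i : ↥(MSet K I k), g i • monomial ((i : Fin n →₀ ℕ)) (1:K)).support := by
      rw [mem_support_iff, hcoeff]; exact hg0
    exact i₀.2.2 (hmon _ hmem _ hsupp)
  have hspan : Submodule.map π (homogeneousSubmodule (Fin n) K k)
      = Submodule.span K (Set.range b) := by
    apply le_antisymm
    · rw [homogeneousSubmodule_eq_finsupp_supported, AddMonoidAlgebra.supported_eq_span_single,
        Submodule.map_span, Submodule.span_le]
      rintro x ⟨y, ⟨d, hd, rfl⟩, rfl⟩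
      have hsingle : (AddMonoidAlgebra.single d 1 : MvPolynomial (Fin n) K) = monomial d 1 :=
        single_eq_monomial d 1
      by_cases hdI : monomial d (1:K) ∈ I
      · have : π (AddMonoidAlgebra.single d 1) = 0 := by
          rw [hsingle, hπmk, Ideal.Quotient.eq_zero_iff_mem]; exact hdI
        rw [SetLike.mem_coe, this]
        exact Submodule.zero_mem _
      · have hdM : d ∈ MSet K I k := ⟨by rw [mdeg_degree]; exact hd, hdI⟩
        rw [SetLike.mem_coe]
        apply Submodule.subset_span
        refine ⟨⟨d, hdM⟩, ?_⟩
        show π (monomial d 1) = π (AddMonoidAlgebra.single d 1)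
        rw [hsingle]
    · rw [Submodule.span_le]
      rintro x ⟨d, rfl⟩
      rw [SetLike.mem_coe, hb]
      exact Submodule.mem_map_of_mem
        (isHomogeneous_monomial 1 (by rw [← mdeg_degree]; exact d.2.1))
  rw [hdim, ← hπ, hspan, finrank_span_eq_card hbli]
  rw [Set.ncard_eq_toFinset_card', Set.toFinset_card]

lemma lym_strict {I : Ideal (MvPolynomial (Fin n) K)} (hLYM : MLYM K I)
    (p : ℕ) (hcard : ∀ k, k < p → (MSet K I k).ncard < (MSet K I p).ncard)
    (F : Finset (Fin n →₀ ℕ)) (hFI : ∀ d ∈ F, monomial d (1:K) ∉ I)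
    (hanti : IsAntichain (· ≤ ·) (F : Set (Fin n →₀ ℕ)))
    (hdle : ∀ d ∈ F, mdeg d ≤ p) (d₀ : Fin n →₀ ℕ) (hd₀ : d₀ ∈ F) (hd₀p : mdeg d₀ < p) :
    F.card < (MSet K I p).ncard := by
  classical
  have hsum := hLYM F hFI hanti
  set N := (MSet K I p).ncard with hN
  have hmem : ∀ d ∈ F, d ∈ MSet K I (mdeg d) := fun d hd => ⟨rfl, hFI d hd⟩
  have hpos : ∀ d ∈ F, 0 < (MSet K I (mdeg d)).ncard := fun d hd =>
    (Set.ncard_pos (MSet_finite I (mdeg d))).2 ⟨d, hmem d hd⟩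
  have hNpos : 0 < N := by
    have h1 := hcard (mdeg d₀) hd₀p
    have h2 := hpos d₀ hd₀
    omega
  have hle : ∀ d ∈ F, (MSet K I (mdeg d)).ncard ≤ N := by
    intro d hd
    rcases lt_or_eq_of_le (hdle d hd) with h | h
    · exact (hcard _ h).le
    · rw [hN, h]
  have hstep : ∀ d ∈ F.erase d₀,
      (1:ℚ)/N ≤ 1/((MSet K I (mdeg d)).ncard : ℚ) := by
    intro d hd
    have hd' := Finset.mem_of_mem_erase hd
    apply one_div_le_one_div_of_le
    · exact_mod_cast hpos d hd'
    · exact_mod_cast hle d hd'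
  have hd₀lt : (1:ℚ)/N < 1/((MSet K I (mdeg d₀)).ncard : ℚ) := by
    apply one_div_lt_one_div_of_lt
    · exact_mod_cast hpos d₀ hd₀
    · exact_mod_cast hcard (mdeg d₀) hd₀p
  have hsplit : (1:ℚ)/((MSet K I (mdeg d₀)).ncard : ℚ)
      + ∑ d ∈ F.erase d₀, (1:ℚ)/((MSet K I (mdeg d)).ncard : ℚ)
      = ∑ d ∈ F, (1:ℚ)/((MSet K I (mdeg d)).ncard : ℚ) :=
    Finset.add_sum_erase F (fun d => (1:ℚ)/((MSet K I (mdeg d)).ncard : ℚ)) hd₀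
  have hlower : ((F.erase d₀).card : ℚ) * ((1:ℚ)/N)
      ≤ ∑ d ∈ F.erase d₀, (1:ℚ)/((MSet K I (mdeg d)).ncard : ℚ) := by
    have := Finset.card_nsmul_le_sum (F.erase d₀) _ _ hstep
    rwa [nsmul_eq_mul] at this
  have hcarderase : (F.erase d₀).card = F.card - 1 := Finset.card_erase_of_mem hd₀
  by_contra hcon
  push_neg at hcon
  have hF1 : 1 ≤ F.card := Finset.card_pos.2 ⟨d₀, hd₀⟩
  have hcast : ((F.erase d₀).card : ℚ) = (F.card : ℚ) - 1 := by
    rw [hcarderase, Nat.cast_sub hF1, Nat.cast_one]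
  have ha : (0:ℚ) < 1/N := by
    apply div_pos one_pos
    exact_mod_cast hNpos
  have h1 : (1:ℚ)/((MSet K I (mdeg d₀)).ncard : ℚ) + ((F.card:ℚ) - 1) * (1/N) ≤ 1 := by
    rw [← hcast]
    linarith [hsum, hsplit, hlower]
  have h2 : ((N:ℚ) - 1) * (1/N) ≤ ((F.card:ℚ) - 1) * (1/N) := by
    apply mul_le_mul_of_nonneg_right _ ha.le
    have : (N:ℚ) ≤ F.card := by exact_mod_cast hcon
    linarith
  have h3 : (N:ℚ) * (1/N) = 1 := by
    field_simp
  have h4 : ((N:ℚ) - 1) * (1/N) = (N:ℚ) * (1/N) - 1/N := by ring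
  linarith [hd₀lt, h1, h2, h3, h4]

end DimLYM

section Lower

variable {K : Type*} [Field K] {n : ℕ}

lemma supp_mmI {I : Ideal (MvPolynomial (Fin n) K)} (hmon : IsMonomialIdeal I)
    {f : MvPolynomial (Fin n) K} (hf : f ∈ mm K n * I) :
    ∀ d ∈ f.support, ∃ i : Fin n, Finsupp.single i 1 ≤ d
      ∧ monomial (d - Finsupp.single i 1) (1:K) ∈ I := by
  classical
  refine Submodule.mul_induction_on hf ?_ ?_
  · intro a ha b hb d hd
    obtain ⟨da, hda, db, hdb, rfl⟩ := Finset.mem_add.1 (support_mul a b hd)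
    have hda0 : da ≠ 0 := by
      rintro rfl
      exact (mem_support_iff.1 hda) (coeff_zero_of_mem_mm ha)
    obtain ⟨i, hi⟩ := Finsupp.support_nonempty_iff.2 hda0
    have hdai : 1 ≤ da i := Nat.one_le_iff_ne_zero.2 (Finsupp.mem_support_iff.1 hi)
    have h1 : Finsupp.single i 1 ≤ da + db :=
      le_trans (single_le_of_mem_support hi) le_self_add
    refine ⟨i, h1, ?_⟩
    refine Iexp_up (hmon b hb db hdb) ?_
    intro j
    rw [Finsupp.tsub_apply, Finsupp.add_apply]
    rcases eq_or_ne j i with rfl | hji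
    · rw [Finsupp.single_eq_same]; omega
    · rw [Finsupp.single_eq_of_ne' (Ne.symm hji)]; omega
  · intro x y hx hy d hd
    rcases Finset.mem_union.1 (Finsupp.support_add hd) with h | h
    exacts [hx d h, hy d h]

lemma supp_mmQ {I : Ideal (MvPolynomial (Fin n) K)} (hmon : IsMonomialIdeal I) {p : ℕ}
    {f : MvPolynomial (Fin n) K} (hf : f ∈ mm K n * (I + mm K n ^ p)) :
    ∀ d ∈ f.support, (∃ i : Fin n, Finsupp.single i 1 ≤ d
      ∧ monomial (d - Finsupp.single i 1) (1:K) ∈ I) ∨ p + 1 ≤ mdeg d := by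
  classical
  rw [mul_add, ← pow_succ'] at hf
  rw [Submodule.add_eq_sup] at hf
  obtain ⟨y, hy, z, hz, rfl⟩ := Submodule.mem_sup.1 hf
  intro d hd
  rcases Finset.mem_union.1 (Finsupp.support_add hd) with h | h
  · exact Or.inl (supp_mmI hmon hy d h)
  · exact Or.inr (supp_mm_pow hz d h)

lemma lower_bound {I : Ideal (MvPolynomial (Fin n) K)} (hmon : IsMonomialIdeal I) (p : ℕ) :
    ({d | d ∈ MinGen I ∧ mdeg d ≤ p} ∪ MSet K I p).ncard ≤ mu (I + mm K n ^ p) := by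
  classical
  set Q := I + mm K n ^ p with hQ
  set G : Set (Fin n →₀ ℕ) := {d | d ∈ MinGen I ∧ mdeg d ≤ p} ∪ MSet K I p with hG
  have hGfin : G.Finite := by
    apply (finite_mdeg_le p).subset
    rintro d (⟨_, hd⟩ | ⟨hd, _⟩)
    exacts [hd, le_of_eq hd]
  haveI : Fintype ↥G := hGfin.fintype
  have hGQ : ∀ d ∈ G, monomial d (1:K) ∈ Q := by
    rintro d (⟨hd, _⟩ | hd)
    · exact Submodule.mem_sup_left hd.1
    · exact Submodule.mem_sup_right (monomial_mem_mm_pow (le_of_eq hd.1.symm))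
  have hGgood : ∀ d ∈ G, ¬((∃ i : Fin n, Finsupp.single i 1 ≤ d
      ∧ monomial (d - Finsupp.single i 1) (1:K) ∈ I) ∨ p + 1 ≤ mdeg d) := by
    rintro d hd (⟨i, hle, hI⟩ | hdeg)
    · have hlt : d - Finsupp.single i 1 < d := by
        refine lt_of_le_of_ne tsub_le_self fun heq => ?_
        have := congrArg (fun v : Fin n →₀ ℕ => v i) heq
        simp only [Finsupp.tsub_apply, Finsupp.single_eq_same] at this
        have hi1 : 1 ≤ d i := hle i |>.trans_eq' (by rw [Finsupp.single_eq_same])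
        omega
      rcases hd with ⟨hd, _⟩ | hd
      · exact hd.2 (d - Finsupp.single i 1) hlt hI
      · exact hd.2 (Iexp_up hI tsub_le_self)
    · rcases hd with ⟨_, hd⟩ | hd
      · omega
      · rw [hd.1] at hdeg; omega
  have key : ∀ s : Finset (MvPolynomial (Fin n) K), Ideal.span ↑s = Q →
      Fintype.card ↥G ≤ s.card := by
    intro s hs
    set mQK : Submodule K (MvPolynomial (Fin n) K) :=
      Submodule.restrictScalars K (mm K n * Q) with hmQK
    set π := mQK.mkQ with hπ
    have hstep1 : ∀ q ∈ Q, π q ∈ Submodule.span K (π '' ↑s) := by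
      intro q hq
      rw [← hs] at hq
      refine Submodule.span_induction ?_ ?_ ?_ ?_ hq
      · intro x hx; exact Submodule.subset_span ⟨x, hx, rfl⟩
      · rw [map_zero]; exact Submodule.zero_mem _
      · intro x y _ _ hx hy; rw [map_add]; exact Submodule.add_mem _ hx hy
      · intro a x hx hpx
        have hxQ : x ∈ Q := by rw [← hs]; exact hx
        have hsplit : a • x = C (constantCoeff a) * x + (a - C (constantCoeff a)) * x := by
          rw [smul_eq_mul]; ring
        have hmemmQ : (a - C (constantCoeff a)) * x ∈ mm K n * Q := by
          refine Submodule.mul_mem_mul ?_ hxQ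
          apply mem_mm_of_coeff_zero
          rw [map_sub, constantCoeff_C, sub_self]
        rw [hsplit, map_add]
        have hz : π ((a - C (constantCoeff a)) * x) = 0 := by
          rw [hπ, Submodule.mkQ_apply, Submodule.Quotient.mk_eq_zero]
          exact hmemmQ
        rw [hz, add_zero]
        have hCc : C (constantCoeff a) * x = (constantCoeff a) • x := (smul_eq_C_mul x _).symm
        rw [hCc, map_smul]
        exact Submodule.smul_mem _ _ hpx
    set b : ↥G → (MvPolynomial (Fin n) K ⧸ mQK) := fun d => π (monomial (↑d) 1) with hb
    have hbli : LinearIndependent K b := by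
      rw [Fintype.linearIndependent_iff]
      intro g hg i₀
      have hmem : (∑ i : ↥G, g i • monomial ((i : Fin n →₀ ℕ)) (1:K)) ∈ mm K n * Q := by
        have h0 : π (∑ i : ↥G, g i • monomial ((i : Fin n →₀ ℕ)) (1:K)) = 0 := by
          rw [map_sum]; simp only [map_smul]; exact hg
        rwa [hπ, Submodule.mkQ_apply, Submodule.Quotient.mk_eq_zero] at h0
      by_contra hg0
      have hcoeff := coeff_combo g (fun i : ↥G => (i : Fin n →₀ ℕ)) Subtype.val_injective i₀
      have hsupp : ((i₀ : Fin n →₀ ℕ)) ∈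
          (∑ i : ↥G, g i • monomial ((i : Fin n →₀ ℕ)) (1:K)).support := by
        rw [mem_support_iff, hcoeff]; exact hg0
      exact hGgood _ i₀.2 (supp_mmQ hmon hmem _ hsupp)
    set W := Submodule.span K (π '' ↑s) with hW
    have himg : π '' ↑s = ↑(s.image π) := Finset.coe_image.symm
    haveI : Module.Finite K ↥W := by
      rw [hW]
      exact Module.Finite.span_of_finite K (Set.Finite.image _ s.finite_toSet)
    set b' : ↥G → ↥W := fun d => ⟨b d, hstep1 _ (hGQ _ d.2)⟩ with hb'
    have hb'li : LinearIndependent K b' := by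
      apply LinearIndependent.of_comp W.subtype
      have : W.subtype ∘ b' = b := rfl
      rw [this]; exact hbli
    calc Fintype.card ↥G ≤ Module.finrank K ↥W := hb'li.fintype_card_le_finrank
    _ ≤ (s.image π).card := by
        rw [hW, himg]; exact finrank_span_finset_le_card _
    _ ≤ s.card := Finset.card_image_le
  have hfg : ∃ s : Finset (MvPolynomial (Fin n) K), Ideal.span ↑s = Q :=
    IsNoetherian.noetherian Q
  have hcardG : G.ncard = Fintype.card ↥G := by
    rw [Set.ncard_eq_toFinset_card', Set.toFinset_card]
  rw [hcardG, mu]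
  apply le_csInf
  · obtain ⟨s, hs⟩ := hfg
    exact ⟨s.card, s, rfl, hs⟩
  · rintro m ⟨s, rfl, hs⟩
    exact key s hs

end Lower

/-- Let `A = S/I` be a monomial Artinian algebra whose monomial poset has the
LYM property, and let `p > 0` be an integer with `dim_K A_p > dim_K A_k` for all
`k < p`.  Then `I + m^p` has the strong Rees property. -/
theorem stmt5 {K : Type*} [Field K] {n : ℕ} (I : Ideal (MvPolynomial (Fin n) K))
    (hmon : IsMonomialIdeal I) [FiniteDimensional K (MvPolynomial (Fin n) K ⧸ I)]
    (hLYM : MLYM K I)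
    (p : ℕ) (hp0 : 0 < p) (hp : ∀ k : ℕ, k < p → hdim K n I k < hdim K n I p) :
    ∀ J : Ideal (MvPolynomial (Fin n) K), IsHomog J → I + mm K n ^ p < J →
      mu J < mu (I + mm K n ^ p) := by
  classical
  intro J hJhom hQJ
  have hIJ : I ≤ J := le_trans le_sup_left hQJ.le
  have hmmJ : mm K n ^ p ≤ J := le_trans le_sup_right hQJ.le
  obtain ⟨d₀, hd₀GS, hd₀I, hd₀p⟩ := exists_low hmon hJhom hQJ
  set GSfin := (GS_finite J p).toFinset with hGSfin
  set A := GSfin.filter (fun d => monomial d (1:K) ∈ I) with hA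
  set B := GSfin.filter (fun d => monomial d (1:K) ∉ I) with hB
  have hcardsplit : A.card + B.card = GSfin.card :=
    Finset.card_filter_add_card_filter_not (fun d => monomial d (1:K) ∈ I)
  have hAsub : (↑A : Set (Fin n →₀ ℕ)) ⊆ {d | d ∈ MinGen I ∧ mdeg d ≤ p} := by
    intro d hd
    obtain ⟨hd1, hd2⟩ := Finset.mem_filter.1 hd
    have hdGS : d ∈ GS J p := (Set.Finite.mem_toFinset _).1 hd1
    exact ⟨GS_I_sub hmon hIJ hdGS hd2, hdGS.1⟩
  have hMGfin : ({d | d ∈ MinGen I ∧ mdeg d ≤ p} : Set (Fin n →₀ ℕ)).Finite :=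
    (finite_mdeg_le p).subset (fun d hd => hd.2)
  have hAcard : A.card ≤ {d | d ∈ MinGen I ∧ mdeg d ≤ p}.ncard := by
    rw [← Set.ncard_coe_finset]
    exact Set.ncard_le_ncard hAsub hMGfin
  have hBsub : (↑B : Set (Fin n →₀ ℕ)) ⊆ GS J p := by
    intro d hd
    obtain ⟨hd1, _⟩ := Finset.mem_filter.1 hd
    exact (Set.Finite.mem_toFinset _).1 hd1
  have hBanti : IsAntichain (· ≤ ·) (↑B : Set (Fin n →₀ ℕ)) := antichain_GS.subset hBsub
  have hBcard : B.card < (MSet K I p).ncard := by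
    refine lym_strict hLYM p ?_ B ?_ hBanti ?_ d₀ ?_ hd₀p
    · intro k hk
      rw [← hdim_eq_ncard hmon, ← hdim_eq_ncard hmon]
      exact hp k hk
    · intro d hd; exact (Finset.mem_filter.1 hd).2
    · intro d hd; exact (hBsub hd).1
    · exact Finset.mem_filter.2 ⟨(Set.Finite.mem_toFinset _).2 hd₀GS, hd₀I⟩
  have hdisj : Disjoint {d | d ∈ MinGen I ∧ mdeg d ≤ p} (MSet K I p) := by
    rw [Set.disjoint_left]; rintro d ⟨hdM, _⟩ hdMSet; exact hdMSet.2 hdM.1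
  have huni : ({d | d ∈ MinGen I ∧ mdeg d ≤ p} ∪ MSet K I p).ncard
      = {d | d ∈ MinGen I ∧ mdeg d ≤ p}.ncard + (MSet K I p).ncard :=
    Set.ncard_union_eq hdisj hMGfin (MSet_finite I p)
  have hupper : mu J ≤ A.card + B.card := by
    rw [hcardsplit]; exact mu_le_card_GS hJhom hmmJ
  have hlow := lower_bound hmon (I := I) p
  omega
end

section
/- For a monomial Artinian K-algebra A = S/I, the algebra A has the Sperner property if and only if the divisibility poset M(A) of monomials not in I has the Sperner property. -/
open MvPolynomial

set_option synthInstance.maxHeartbeats 1000000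
set_option maxHeartbeats 1000000
set_option linter.unusedSectionVars false

section aux
variable {K : Type*} [Field K] {n : ℕ} (I : Ideal (MvPolynomial (Fin n) K))

/-- standard exponents -/
def stdS : Set (Fin n →₀ ℕ) := {d | monomial d (1:K) ∉ I}

noncomputable def pia : MvPolynomial (Fin n) K →ₐ[K] MvPolynomial (Fin n) K ⧸ I :=
  Ideal.Quotient.mkₐ K I

lemma pia_surj : Function.Surjective (pia I) := Ideal.Quotient.mkₐ_surjective K I

lemma pia_monomial (d : Fin n →₀ ℕ) (c : K) :
    pia I (monomial d c) = c • pia I (monomial d (1:K)) := by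
  rw [← map_smul]; congr 1; rw [smul_monomial, smul_eq_mul, mul_one]

lemma pia_monomial_eq_zero {d : Fin n →₀ ℕ} (h : d ∉ stdS I) :
    pia I (monomial d (1:K)) = 0 := by
  show Ideal.Quotient.mk I _ = 0
  rw [Ideal.Quotient.eq_zero_iff_mem]
  exact not_not.mp h

lemma indep (hmon : IsMonomialIdeal I) :
    LinearIndependent K (fun d : stdS I => pia I (monomial d.1 (1:K))) := by
  rw [linearIndependent_iff']
  intro s g hsum i hi
  by_contra hgi
  have hmem : (∑ j ∈ s, monomial j.1 (g j)) ∈ I := by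
    rw [← Ideal.Quotient.eq_zero_iff_mem]
    have : pia I (∑ j ∈ s, monomial j.1 (g j)) =
        ∑ j ∈ s, g j • pia I (monomial j.1 (1:K)) := by
      rw [map_sum]
      exact Finset.sum_congr rfl fun j _ => pia_monomial I j.1 (g j)
    rw [show Ideal.Quotient.mk I (∑ j ∈ s, monomial j.1 (g j))
        = pia I (∑ j ∈ s, monomial j.1 (g j)) from rfl, this, hsum]
  have hcoeff : coeff i.1 (∑ j ∈ s, monomial j.1 (g j)) = g i := by
    rw [coeff_sum, Finset.sum_eq_single i]
    · simp [coeff_monomial]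
    · intro j hj hne
      rw [coeff_monomial, if_neg (fun h => hne (Subtype.ext h))]
    · exact fun h => absurd hi h
  have hsupp : i.1 ∈ (∑ j ∈ s, monomial j.1 (g j)).support := by
    rw [MvPolynomial.mem_support_iff, hcoeff]; exact hgi
  exact i.2 (hmon _ hmem _ hsupp)

lemma spans : ⊤ ≤ Submodule.span K (Set.range (fun d : stdS I => pia I (monomial d.1 (1:K)))) := by
  intro a _
  obtain ⟨f, rfl⟩ := pia_surj I a
  rw [f.as_sum, map_sum]
  refine Submodule.sum_mem _ fun d _ => ?_
  rw [pia_monomial]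
  by_cases hstd : d ∈ stdS I
  · exact Submodule.smul_mem _ _ (Submodule.subset_span ⟨⟨d, hstd⟩, rfl⟩)
  · rw [pia_monomial_eq_zero I hstd, smul_zero]; exact Submodule.zero_mem _

/-- the monomial basis of the quotient -/
noncomputable def mb (hmon : IsMonomialIdeal I) : Module.Basis (stdS I) K (MvPolynomial (Fin n) K ⧸ I) :=
  Module.Basis.mk (indep I hmon) (spans I)

variable (hmon : IsMonomialIdeal I)

lemma mb_apply (d : stdS I) : mb I hmon d = pia I (monomial d.1 (1:K)) := Module.Basis.mk_apply _ _ _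

/-- The key computational lemma. -/
lemma repr_pia (f : MvPolynomial (Fin n) K) (d : stdS I) :
    (mb I hmon).repr (pia I f) d = coeff d.1 f := by
  induction f using MvPolynomial.induction_on' with
  | monomial w c =>
    rw [pia_monomial, coeff_monomial]
    by_cases hw : w ∈ stdS I
    · have hmb : pia I (monomial w (1:K)) = mb I hmon ⟨w, hw⟩ := (mb_apply I hmon ⟨w, hw⟩).symm
      rw [hmb, map_smul, Module.Basis.repr_self]
      by_cases h : w = d.1
      · rw [if_pos h]
        have : (⟨w, hw⟩ : stdS I) = d := Subtype.ext h
        simp [this]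
      · rw [if_neg h]
        have : (⟨w, hw⟩ : stdS I) ≠ d := fun hh => h (congrArg Subtype.val hh)
        simp only [map_smul, Finsupp.smul_apply, Finsupp.single_apply,
          if_neg this, smul_zero]
    · rw [pia_monomial_eq_zero I hw, smul_zero,
        if_neg (show ¬ w = d.1 from fun h => hw (by rw [h]; exact d.2))]
      simp
  | add p q hp hq => rw [map_add, map_add, coeff_add, Finsupp.add_apply, hp, hq]

end aux

section lt
variable {K : Type*} [Field K] {n : ℕ} (I : Ideal (MvPolynomial (Fin n) K))
  (hmon : IsMonomialIdeal I)

noncomputable def mo (n : ℕ) : MonomialOrder (Fin n) := MonomialOrder.lex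

/-- leading degree (in the order synonym type); `0` for `a = 0`. -/
noncomputable def ldeg (a : MvPolynomial (Fin n) K ⧸ I) : (mo n).syn :=
  ((mb I hmon).repr a).support.sup (fun d => (mo n).toSyn d.1)

/-- leading exponent -/
noncomputable def lexp (a : MvPolynomial (Fin n) K ⧸ I) : Fin n →₀ ℕ :=
  (mo n).toSyn.symm (ldeg I hmon a)

lemma le_ldeg {a : MvPolynomial (Fin n) K ⧸ I} {d : stdS I}
    (h : d ∈ ((mb I hmon).repr a).support) : (mo n).toSyn d.1 ≤ ldeg I hmon a :=
  Finset.le_sup (f := fun d : stdS I => (mo n).toSyn d.1) h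

lemma repr_eq_zero_of_ldeg_lt {a : MvPolynomial (Fin n) K ⧸ I} {d : stdS I}
    (h : ldeg I hmon a < (mo n).toSyn d.1) : (mb I hmon).repr a d = 0 := by
  by_contra hne
  exact absurd (le_ldeg I hmon (Finsupp.mem_support_iff.mpr hne)) (not_le.mpr h)

lemma exists_top {a : MvPolynomial (Fin n) K ⧸ I} (h : a ≠ 0) :
    ∃ d : stdS I, d ∈ ((mb I hmon).repr a).support ∧ d.1 = lexp I hmon a ∧
      (mo n).toSyn d.1 = ldeg I hmon a := by
  have hne : (((mb I hmon).repr a).support).Nonempty := by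
    rw [Finsupp.support_nonempty_iff]
    simpa using h
  obtain ⟨d, hd, hsup⟩ := Finset.exists_mem_eq_sup _ hne (fun d : stdS I => (mo n).toSyn d.1)
  refine ⟨d, hd, ?_, hsup.symm⟩
  have h1 : ldeg I hmon a = (mo n).toSyn d.1 := hsup
  rw [lexp, h1, (mo n).toSyn.symm_apply_apply]

lemma lexp_std {a : MvPolynomial (Fin n) K ⧸ I} (h : a ≠ 0) : lexp I hmon a ∈ stdS I := by
  obtain ⟨d, _, hd, _⟩ := exists_top I hmon h
  exact hd ▸ d.2

lemma toSyn_lexp (a : MvPolynomial (Fin n) K ⧸ I) :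
    (mo n).toSyn (lexp I hmon a) = ldeg I hmon a := (mo n).toSyn.apply_symm_apply _

lemma lc_ne_zero {a : MvPolynomial (Fin n) K ⧸ I} (h : a ≠ 0) (hstd : lexp I hmon a ∈ stdS I) :
    (mb I hmon).repr a ⟨lexp I hmon a, hstd⟩ ≠ 0 := by
  obtain ⟨d, hd, hval, _⟩ := exists_top I hmon h
  have : d = ⟨lexp I hmon a, hstd⟩ := Subtype.ext hval
  rw [← this]
  exact Finsupp.mem_support_iff.mp hd

/-- canonical representative -/
noncomputable def nform (a : MvPolynomial (Fin n) K ⧸ I) : MvPolynomial (Fin n) K :=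
  ∑ d ∈ ((mb I hmon).repr a).support, monomial d.1 ((mb I hmon).repr a d)

lemma pia_nform (a : MvPolynomial (Fin n) K ⧸ I) : pia I (nform I hmon a) = a := by
  rw [nform, map_sum]
  have : ∀ d ∈ ((mb I hmon).repr a).support,
      pia I (monomial d.1 ((mb I hmon).repr a d)) = ((mb I hmon).repr a d) • mb I hmon d := by
    intro d _
    rw [pia_monomial, mb_apply]
  rw [Finset.sum_congr rfl this]
  have h2 := Module.Basis.linearCombination_repr (mb I hmon) a
  rwa [Finsupp.linearCombination_apply, Finsupp.sum] at h2

/-- key multiplication formula -/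
lemma repr_monomial_mul (e : Fin n →₀ ℕ) (a : MvPolynomial (Fin n) K ⧸ I) (ds : stdS I) :
    (mb I hmon).repr (pia I (monomial e (1:K)) * a) ds =
      ∑ d' ∈ ((mb I hmon).repr a).support,
        (if e + d'.1 = ds.1 then (mb I hmon).repr a d' else 0) := by
  conv_lhs => rw [← pia_nform I hmon a]
  rw [← map_mul, nform, Finset.mul_sum]
  have : ∀ d' ∈ ((mb I hmon).repr a).support,
      monomial e (1:K) * monomial d'.1 ((mb I hmon).repr a d')
        = monomial (e + d'.1) ((mb I hmon).repr a d') := by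
    intro d' _
    rw [monomial_mul, one_mul]
  rw [Finset.sum_congr rfl this, repr_pia, coeff_sum]
  exact Finset.sum_congr rfl fun d' _ => coeff_monomial _ _ _

lemma ldeg_monomial_mul_le (e : Fin n →₀ ℕ) (a : MvPolynomial (Fin n) K ⧸ I) {ds : stdS I}
    (h : (mb I hmon).repr (pia I (monomial e (1:K)) * a) ds ≠ 0) :
    (mo n).toSyn ds.1 ≤ (mo n).toSyn e + ldeg I hmon a := by
  rw [repr_monomial_mul I hmon] at h
  obtain ⟨d', hd', hne⟩ := Finset.exists_ne_zero_of_sum_ne_zero h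
  by_cases hc : e + d'.1 = ds.1
  · rw [← hc, map_add]
    exact add_le_add (le_refl _) (le_ldeg I hmon hd')
  · rw [if_neg hc] at hne; exact absurd rfl hne

lemma repr_monomial_mul_top (e : Fin n →₀ ℕ) {a : MvPolynomial (Fin n) K ⧸ I} (ha : a ≠ 0)
    (hstd : e + lexp I hmon a ∈ stdS I) (hstd' : lexp I hmon a ∈ stdS I) :
    (mb I hmon).repr (pia I (monomial e (1:K)) * a) ⟨e + lexp I hmon a, hstd⟩ =
      (mb I hmon).repr a ⟨lexp I hmon a, hstd'⟩ := by
  rw [repr_monomial_mul I hmon]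
  rw [Finset.sum_eq_single (⟨lexp I hmon a, hstd'⟩ : stdS I)]
  · rw [if_pos rfl]
  · intro d' _ hne
    rw [if_neg]
    intro hc
    exact hne (Subtype.ext (add_left_cancel hc))
  · intro hni
    obtain ⟨d, hd, hval, _⟩ := exists_top I hmon ha
    exact absurd (show d ∈ _ from hd) (by rwa [show d = ⟨lexp I hmon a, hstd'⟩ from Subtype.ext hval])

end lt


section red
variable {K : Type*} [Field K] {n : ℕ} (I : Ideal (MvPolynomial (Fin n) K))
  (hmon : IsMonomialIdeal I)

lemma reduce {g a : MvPolynomial (Fin n) K ⧸ I} (hg : g ≠ 0) (ha : a ≠ 0)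
    (hle : lexp I hmon a ≤ lexp I hmon g) :
    ∃ r : MvPolynomial (Fin n) K ⧸ I,
      g - r * a = 0 ∨ (g - r * a ≠ 0 ∧ ldeg I hmon (g - r * a) < ldeg I hmon g) := by
  set v := lexp I hmon g with hv
  set u := lexp I hmon a with hu
  have hstdv : v ∈ stdS I := lexp_std I hmon hg
  have hstdu : u ∈ stdS I := lexp_std I hmon ha
  set e := v - u with he0
  have he : e + u = v := by
    rw [he0, add_comm]; exact add_tsub_cancel_of_le hle
  set ca := (mb I hmon).repr a ⟨u, hstdu⟩ with hca
  set cg := (mb I hmon).repr g ⟨v, hstdv⟩ with hcg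
  have hca0 : ca ≠ 0 := lc_ne_zero I hmon ha hstdu
  refine ⟨(cg / ca) • pia I (monomial e (1:K)), ?_⟩
  set r := (cg / ca) • pia I (monomial e (1:K)) with hr
  have hra : r * a = (cg / ca) • (pia I (monomial e (1:K)) * a) := smul_mul_assoc _ _ _
  -- vanishing of repr (g - r*a) at indices ≥ ldeg g
  have hvan : ∀ ds : stdS I, ldeg I hmon g ≤ (mo n).toSyn ds.1 →
      (mb I hmon).repr (g - r * a) ds = 0 := by
    intro ds hds
    rw [map_sub, Finsupp.sub_apply, hra, map_smul, Finsupp.smul_apply]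
    rcases lt_or_eq_of_le hds with hlt | heq
    · rw [repr_eq_zero_of_ldeg_lt I hmon hlt]
      have h2 : (mb I hmon).repr (pia I (monomial e (1:K)) * a) ds = 0 := by
        by_contra hne
        have h3 := ldeg_monomial_mul_le I hmon e a hne
        have h4 : (mo n).toSyn e + ldeg I hmon a = ldeg I hmon g := by
          rw [← toSyn_lexp I hmon a, ← map_add]
          show (mo n).toSyn (e + u) = _
          rw [he]
          exact toSyn_lexp I hmon g
        rw [h4] at h3
        exact absurd (lt_of_lt_of_le hlt h3) (lt_irrefl _)
      rw [h2, smul_zero, sub_zero]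
    · have hdsv : ds = ⟨v, hstdv⟩ := by
        apply Subtype.ext
        have : (mo n).toSyn ds.1 = (mo n).toSyn v := by
          rw [← heq, ← toSyn_lexp I hmon g]
        exact (mo n).toSyn.injective this
      subst hdsv
      have hvstd' : e + lexp I hmon a ∈ stdS I := by
        have h5 : e + lexp I hmon a = v := he
        rw [h5]; exact hstdv
      have htop := repr_monomial_mul_top I hmon e ha hvstd' hstdu
      have hcast : (⟨e + lexp I hmon a, hvstd'⟩ : stdS I) = ⟨v, hstdv⟩ := Subtype.ext he
      rw [hcast] at htop
      rw [htop]
      show cg - (cg / ca) • ca = 0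
      rw [smul_eq_mul, div_mul_cancel₀ _ hca0, sub_self]
  by_cases hzero : g - r * a = 0
  · exact Or.inl hzero
  · refine Or.inr ⟨hzero, ?_⟩
    have hsupp : ∀ ds ∈ ((mb I hmon).repr (g - r * a)).support,
        (mo n).toSyn ds.1 < ldeg I hmon g := by
      intro ds hds
      by_contra hnot
      exact absurd (hvan ds (le_of_not_gt hnot)) (Finsupp.mem_support_iff.mp hds)
    rcases eq_bot_or_bot_lt (ldeg I hmon g) with hbot | hbot
    · exfalso
      have hne : (((mb I hmon).repr (g - r * a)).support).Nonempty := by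
        rw [Finsupp.support_nonempty_iff]
        exact fun hrepr => hzero ((LinearEquiv.map_eq_zero_iff _).mp hrepr)
      obtain ⟨ds, hds⟩ := hne
      exact absurd (hsupp ds hds) (by rw [hbot]; exact not_lt_bot)
    · rw [ldeg]
      exact Finset.sup_lt_iff hbot |>.mpr hsupp

/-- leading exponents of an ideal -/
def ltSet (J : Ideal (MvPolynomial (Fin n) K ⧸ I)) : Set (Fin n →₀ ℕ) :=
  {v | ∃ g ∈ J, g ≠ 0 ∧ lexp I hmon g = v}

lemma ltSet_sub_std (J : Ideal (MvPolynomial (Fin n) K ⧸ I)) : ltSet I hmon J ⊆ stdS I := by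
  rintro v ⟨g, _, hg0, rfl⟩; exact lexp_std I hmon hg0

variable [FiniteDimensional K (MvPolynomial (Fin n) K ⧸ I)]

include hmon in
lemma stdS_finite : (stdS I).Finite := by
  have : Fintype (stdS I) := FiniteDimensional.fintypeBasisIndex (mb I hmon)
  exact (stdS I).toFinite

include hmon in
/-- The main upper bound: `mu J` is at most the size of some standard antichain. -/
theorem mu_le_antichain (J : Ideal (MvPolynomial (Fin n) K ⧸ I)) :
    ∃ F : Finset (Fin n →₀ ℕ), (∀ d ∈ F, (monomial d (1:K)) ∉ I) ∧
      IsAntichain (· ≤ ·) (F : Set (Fin n →₀ ℕ)) ∧ mu J ≤ F.card := by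
  classical
  have hltfin : (ltSet I hmon J).Finite := (stdS_finite I hmon).subset (ltSet_sub_std I hmon J)
  set minS : Set (Fin n →₀ ℕ) :=
    {v | v ∈ ltSet I hmon J ∧ ∀ w ∈ ltSet I hmon J, ¬ w < v} with hminS
  have hminfin : minS.Finite := hltfin.subset (fun v hv => hv.1)
  set F : Finset (Fin n →₀ ℕ) := hminfin.toFinset with hF
  have hmemF : ∀ v, v ∈ F ↔ v ∈ minS := fun v => Set.Finite.mem_toFinset _
  have hch : ∀ v : {x // x ∈ F}, ∃ g, g ∈ J ∧ g ≠ 0 ∧ lexp I hmon g = v.1 := by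
    rintro ⟨v, hv⟩
    obtain ⟨⟨g, hgJ, hg0, hgl⟩, -⟩ := (hmemF v).mp hv
    exact ⟨g, hgJ, hg0, hgl⟩
  choose gf hgf1 hgf2 hgf3 using hch
  set G : Finset (MvPolynomial (Fin n) K ⧸ I) := F.attach.image gf with hG
  -- span G = J
  have hGJ : ∀ x ∈ G, x ∈ J := by
    intro x hx
    obtain ⟨v, -, rfl⟩ := Finset.mem_image.mp hx
    exact hgf1 v
  have main : ∀ s : (mo n).syn, ∀ g ∈ J, g ≠ 0 → ldeg I hmon g = s →
      g ∈ Ideal.span (G : Set (MvPolynomial (Fin n) K ⧸ I)) := by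
    have wf : WellFounded ((· < ·) : (mo n).syn → (mo n).syn → Prop) := IsWellFounded.wf
    intro s
    induction s using WellFounded.induction wf with
    | _ s IH =>
      intro g hgJ hg0 hdeg
      set v := lexp I hmon g with hv
      have hvlt : v ∈ ltSet I hmon J := ⟨g, hgJ, hg0, rfl⟩
      -- find a minimal u ≤ v in ltSet
      have hsubfin : ({w ∈ ltSet I hmon J | w ≤ v}).Finite :=
        hltfin.subset (fun w hw => hw.1)
      have hsubne : (hsubfin.toFinset).Nonempty :=
        ⟨v, (Set.Finite.mem_toFinset _).mpr ⟨hvlt, le_refl v⟩⟩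
      obtain ⟨u, hu, humin⟩ : ∃ u ∈ hsubfin.toFinset, ∀ x ∈ hsubfin.toFinset, ¬ x < u := by
        obtain ⟨u, hu⟩ := Finset.exists_minimal hsubne
        exact ⟨u, hu.1, fun x hx hlt => hlt.not_ge (hu.2 hx hlt.le)⟩
      rw [Set.Finite.mem_toFinset] at hu
      obtain ⟨hult, hulev⟩ := hu
      have huminS : u ∈ minS := by
        refine ⟨hult, fun w hw hlt => ?_⟩
        exact humin w ((Set.Finite.mem_toFinset _).mpr ⟨hw, le_of_lt (lt_of_lt_of_le hlt hulev)⟩) hlt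
      have huF : u ∈ F := (hmemF u).mpr huminS
      set a := gf ⟨u, huF⟩ with hadef
      have haG : a ∈ G := Finset.mem_image.mpr ⟨⟨u, huF⟩, Finset.mem_attach _ _, rfl⟩
      have ha0 : a ≠ 0 := hgf2 _
      have hale : lexp I hmon a ≤ lexp I hmon g := by rw [hgf3 ⟨u, huF⟩]; exact hulev
      obtain ⟨r, hcase⟩ := reduce I hmon hg0 ha0 hale
      have hra_mem : r * a ∈ Ideal.span (G : Set _) :=
        Ideal.mul_mem_left _ _ (Ideal.subset_span haG)
      rcases hcase with h0 | ⟨hne, hlt⟩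
      · have : g = r * a := by linear_combination h0
        rw [this]; exact hra_mem
      · have hgin : g - r * a ∈ J := J.sub_mem hgJ (J.mul_mem_left r (hgf1 ⟨u, huF⟩))
        have := IH (ldeg I hmon (g - r * a)) (hdeg ▸ hlt) (g - r * a) hgin hne rfl
        have hgeq : g = (g - r * a) + r * a := by ring
        rw [hgeq]
        exact Ideal.add_mem _ this hra_mem
  have hspan : Ideal.span (G : Set (MvPolynomial (Fin n) K ⧸ I)) = J := by
    apply le_antisymm
    · rw [Ideal.span_le]; exact hGJ
    · intro g hg
      by_cases hg0 : g = 0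
      · rw [hg0]; exact Ideal.zero_mem _
      · exact main _ g hg hg0 rfl
  refine ⟨F, ?_, ?_, ?_⟩
  · intro d hd
    exact ltSet_sub_std I hmon J ((hmemF d).mp hd).1
  · intro a ha b hb hne hle
    obtain ⟨halt, -⟩ := (hmemF a).mp (by exact_mod_cast ha)
    obtain ⟨-, hbmin⟩ := (hmemF b).mp (by exact_mod_cast hb)
    exact hbmin a halt (lt_of_le_of_ne hle hne)
  · calc mu J ≤ G.card := Nat.sInf_le ⟨G, rfl, hspan⟩
    _ ≤ F.attach.card := Finset.card_image_le
    _ = F.card := Finset.card_attach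
end red

section low
variable {K : Type*} [Field K] {n : ℕ} (I : Ideal (MvPolynomial (Fin n) K))
  (hmon : IsMonomialIdeal I)

/-- the image of the graded maximal ideal in the quotient -/
noncomputable def mAq : Ideal (MvPolynomial (Fin n) K ⧸ I) :=
  Ideal.map (Ideal.Quotient.mk I) (Ideal.span (Set.range (X : Fin n → MvPolynomial (Fin n) K)))

lemma mem_mAq {a : MvPolynomial (Fin n) K ⧸ I} :
    a ∈ mAq I ↔ ∃ f ∈ Ideal.span (Set.range (X : Fin n → MvPolynomial (Fin n) K)), pia I f = a :=
  Ideal.mem_map_iff_of_surjective _ Ideal.Quotient.mk_surjective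

lemma mem_mmspan {f : MvPolynomial (Fin n) K} :
    f ∈ Ideal.span (Set.range (X : Fin n → MvPolynomial (Fin n) K)) ↔
      ∀ m ∈ f.support, m ≠ 0 := by
  rw [← Set.image_univ, mem_ideal_span_X_image]
  constructor
  · intro h m hm h0
    obtain ⟨i, -, hi⟩ := h m hm
    rw [h0] at hi; simp at hi
  · intro h m hm
    obtain ⟨i, hi⟩ := Finsupp.ne_iff.mp (h m hm)
    exact ⟨i, trivial, by simpa using hi⟩

/-- decomposition of elements of the quotient -/
lemma decomp (a : MvPolynomial (Fin n) K ⧸ I) :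
    ∃ c : K, ∃ a' ∈ mAq I, a = algebraMap K _ c + a' := by
  obtain ⟨f, rfl⟩ := pia_surj I a
  refine ⟨constantCoeff f, pia I (f - C (constantCoeff f)), ?_, ?_⟩
  · rw [mem_mAq]
    refine ⟨_, ?_, rfl⟩
    rw [mem_mmspan]
    intro m hm h0
    rw [MvPolynomial.mem_support_iff, h0] at hm
    apply hm
    rw [coeff_sub, coeff_zero_C, ← constantCoeff_eq]
    ring
  · have hC : pia I (C (constantCoeff f)) = algebraMap K _ (constantCoeff f) := by
      rw [← MvPolynomial.algebraMap_eq]; exact (pia I).commutes _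
    rw [map_sub, hC]; ring

variable {F : Finset (Fin n →₀ ℕ)} (hFstd : ∀ d ∈ F, d ∈ stdS I)
  (hFac : IsAntichain (· ≤ ·) (F : Set (Fin n →₀ ℕ)))

include hmon hFstd hFac

/-- vanishing: elements of `m·J_F` have no coordinates on the antichain -/
lemma vanish_on_F (x : MvPolynomial (Fin n) K ⧸ I)
    (hx : x ∈ mAq I * Ideal.span ((fun d => pia I (monomial d (1:K))) '' (F : Set _)))
    (ds : stdS I) (hds : ds.1 ∈ F) : (mb I hmon).repr x ds = 0 := by
  classical
  revert ds
  refine Submodule.mul_induction_on hx ?_ ?_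
  · intro m hm x hx ds hds
    obtain ⟨f, hf, rfl⟩ := (mem_mAq I).mp hm
    clear hm
    revert f
    refine Submodule.span_induction ?_ ?_ ?_ ?_ hx
    · rintro y ⟨d, hdF, rfl⟩ f hf
      rw [← map_mul, repr_pia]
      rw [show f * monomial d (1:K) = ∑ c ∈ f.support, monomial (c + d) (coeff c f) by
        conv_lhs => rw [f.as_sum]
        rw [Finset.sum_mul]
        exact Finset.sum_congr rfl fun c _ => by rw [monomial_mul, mul_one]]
      rw [coeff_sum]
      refine Finset.sum_eq_zero fun c hc => ?_
      rw [coeff_monomial, if_neg]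
      intro hcd
      have hc0 : c ≠ 0 := mem_mmspan.mp hf c hc
      have hdle : d ≤ ds.1 := by rw [← hcd]; exact le_add_self
      have hdne : d ≠ ds.1 := by
        intro h
        apply hc0
        have h2 : c + d = d := by rw [hcd, h]
        simpa using h2
      exact hFac (Finset.mem_coe.mpr hdF) (Finset.mem_coe.mpr hds) hdne hdle
    · intro f hf
      rw [mul_zero]; simp
    · intro y z _ _ hy hz f hf
      rw [mul_add, map_add, Finsupp.add_apply, hy f hf, hz f hf, add_zero]
    · intro r y _ hy f hf
      obtain ⟨h, rfl⟩ := pia_surj I r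
      rw [smul_eq_mul, show pia I f * (pia I h * y) = pia I (f * h) * y by
        rw [map_mul]; ring]
      exact hy (f * h) (Ideal.mul_mem_right h _ hf)
  · intro x y hx hy ds hds
    rw [map_add, Finsupp.add_apply, hx ds hds, hy ds hds, add_zero]

/-- the antichain card is at most the card of any generating set of `J_F` -/
lemma card_le_gen [FiniteDimensional K (MvPolynomial (Fin n) K ⧸ I)]
    (s : Finset (MvPolynomial (Fin n) K ⧸ I))
    (hspan : Ideal.span (s : Set (MvPolynomial (Fin n) K ⧸ I))
      = Ideal.span ((fun d => pia I (monomial d (1:K))) '' (F : Set _))) :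
    F.card ≤ s.card := by
  classical
  set JF : Ideal (MvPolynomial (Fin n) K ⧸ I) :=
    Ideal.span ((fun d => pia I (monomial d (1:K))) '' (F : Set _)) with hJF
  set N : Submodule K (MvPolynomial (Fin n) K ⧸ I) :=
    Submodule.restrictScalars K (mAq I * JF) with hN
  -- the claim: q of everything in JF is in span of q '' s
  have hclaim : ∀ x ∈ Ideal.span (s : Set (MvPolynomial (Fin n) K ⧸ I)),
      x ∈ JF ∧ N.mkQ x ∈ Submodule.span K (N.mkQ '' (s : Set _)) := by
    intro x hx
    refine Submodule.span_induction ?_ ?_ ?_ ?_ hx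
    · intro y hy
      exact ⟨hspan ▸ Ideal.subset_span hy, Submodule.subset_span ⟨y, hy, rfl⟩⟩
    · exact ⟨Ideal.zero_mem _, by rw [map_zero]; exact Submodule.zero_mem _⟩
    · rintro y z _ _ ⟨hyJ, hyq⟩ ⟨hzJ, hzq⟩
      exact ⟨Ideal.add_mem _ hyJ hzJ, by rw [map_add]; exact Submodule.add_mem _ hyq hzq⟩
    · rintro a y _ ⟨hyJ, hyq⟩
      refine ⟨Ideal.mul_mem_left _ a hyJ, ?_⟩
      obtain ⟨c, a', ha', rfl⟩ := decomp I a
      have h1 : (algebraMap K _ c + a') • y = c • y + a' * y := by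
        rw [smul_eq_mul, add_mul, ← Algebra.smul_def]
      rw [h1, map_add, map_smul]
      have h2 : N.mkQ (a' * y) = 0 := by
        rw [Submodule.mkQ_apply, Submodule.Quotient.mk_eq_zero]
        exact Ideal.mul_mem_mul ha' hyJ
      rw [h2, add_zero]
      exact Submodule.smul_mem _ _ hyq
  -- linear independence of the images of the antichain
  have hind : LinearIndependent K (fun d : {x // x ∈ F} => N.mkQ (pia I (monomial d.1 (1:K)))) := by
    rw [linearIndependent_iff']
    intro t g hsum i hi
    have hmem : (∑ j ∈ t, g j • pia I (monomial j.1 (1:K))) ∈ N := by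
      rw [← Submodule.Quotient.mk_eq_zero, ← Submodule.mkQ_apply]
      have h3 : N.mkQ (∑ j ∈ t, g j • pia I (monomial j.1 (1:K)))
          = ∑ j ∈ t, g j • N.mkQ (pia I (monomial j.1 (1:K))) := by
        rw [map_sum]
        exact Finset.sum_congr rfl fun j _ => map_smul _ _ _
      rw [h3, hsum]
    have hvan := vanish_on_F I hmon hFstd hFac _ hmem ⟨i.1, hFstd i.1 i.2⟩ i.2
    have hsum2 : (mb I hmon).repr (∑ j ∈ t, g j • pia I (monomial j.1 (1:K)))
        ⟨i.1, hFstd i.1 i.2⟩ = g i := by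
      rw [map_sum, Finset.sum_apply']
      rw [Finset.sum_congr rfl (fun j (hj : j ∈ t) => by
        rw [map_smul, Finsupp.smul_apply, repr_pia I hmon, coeff_monomial, smul_eq_mul])]
      rw [Finset.sum_eq_single i (fun j _ hne => by
        rw [if_neg (fun h : j.1 = i.1 => hne (Subtype.ext h)), mul_zero])
        (fun h => absurd hi h), if_pos rfl, mul_one]
    rw [hsum2] at hvan
    exact hvan
  -- all of them live in the span of mkQ '' s
  have hmemW : ∀ d : {x // x ∈ F},
      N.mkQ (pia I (monomial d.1 (1:K))) ∈ Submodule.span K (N.mkQ '' (s : Set _)) := by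
    intro d
    have hmem : pia I (monomial d.1 (1:K)) ∈ Ideal.span (s : Set _) := by
      rw [hspan]
      exact Ideal.subset_span ⟨d.1, d.2, rfl⟩
    exact (hclaim _ hmem).2
  set W : Submodule K _ := Submodule.span K (N.mkQ '' (s : Set _)) with hW
  have hindW : LinearIndependent K
      (fun d : {x // x ∈ F} => (⟨N.mkQ (pia I (monomial d.1 (1:K))), hmemW d⟩ : W)) := by
    apply LinearIndependent.of_comp W.subtype
    exact hind
  have hcard : Fintype.card {x // x ∈ F} ≤ Module.finrank K W :=
    hindW.fintype_card_le_finrank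
  have hWle : Module.finrank K W ≤ (s.image N.mkQ).card := by
    have h4 : W = Submodule.span K ((s.image N.mkQ : Finset _) : Set _) := by
      rw [hW, Finset.coe_image]
    rw [h4]
    exact finrank_span_finset_le_card _
  calc F.card = Fintype.card {x // x ∈ F} := (Fintype.card_coe F).symm
    _ ≤ Module.finrank K W := hcard
    _ ≤ (s.image N.mkQ).card := hWle
    _ ≤ s.card := Finset.card_image_le

/-- lower bound: there is an ideal whose `mu` is at least the antichain's size -/
lemma antichain_le_mu [FiniteDimensional K (MvPolynomial (Fin n) K ⧸ I)] :
    F.card ≤ mu (Ideal.span ((fun d => pia I (monomial d (1:K))) '' (F : Set _))) := by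
  classical
  have hne : {k | ∃ s : Finset (MvPolynomial (Fin n) K ⧸ I),
      s.card = k ∧ Ideal.span (s : Set _)
        = Ideal.span ((fun d => pia I (monomial d (1:K))) '' (F : Set _))}.Nonempty := by
    refine ⟨(F.image (fun d => pia I (monomial d (1:K)))).card,
      F.image (fun d => pia I (monomial d (1:K))), rfl, ?_⟩
    rw [Finset.coe_image]
  obtain ⟨s, hcard, hspan⟩ := Nat.sInf_mem hne
  rw [mu, ← hcard]
  exact card_le_gen I hmon hFstd hFac s hspan

end low









section hilbert
variable {K : Type*} [Field K] {n : ℕ} (I : Ideal (MvPolynomial (Fin n) K))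
  (hmon : IsMonomialIdeal I)

lemma mdeg_eq_weight (d : Fin n →₀ ℕ) : (Finsupp.weight (1 : Fin n → ℕ)) d = mdeg d := by
  simp [Finsupp.weight, mdeg, Finsupp.sum, Finsupp.linearCombination, Pi.one_apply]

lemma mdeg_eq_degree (d : Fin n →₀ ℕ) : d.degree = mdeg d := rfl

variable [FiniteDimensional K (MvPolynomial (Fin n) K ⧸ I)]

include hmon in
lemma hdim_eq (k : ℕ) : hdim K n I k = (MSet K I k).ncard := by
  classical
  set Fk : Finset (Fin n →₀ ℕ) :=
    (stdS_finite I hmon).toFinset.filter (fun d => mdeg d = k) with hFk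
  have hmemFk : ∀ d, d ∈ Fk ↔ (d ∈ stdS I ∧ mdeg d = k) := by
    intro d
    rw [hFk, Finset.mem_filter, Set.Finite.mem_toFinset]
  have hMSet : MSet K I k = (Fk : Set (Fin n →₀ ℕ)) := by
    ext d
    rw [Finset.mem_coe, hmemFk]
    exact ⟨fun ⟨h1, h2⟩ => ⟨h2, h1⟩, fun ⟨h1, h2⟩ => ⟨h2, h1⟩⟩
  -- the submodule identification
  have hsub : Submodule.map (Ideal.Quotient.mkₐ K I).toLinearMap
      (homogeneousSubmodule (Fin n) K k)
      = Submodule.span K ((fun d => pia I (monomial d (1:K))) '' (Fk : Set _)) := by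
    apply le_antisymm
    · rintro _ ⟨f, hf, rfl⟩
      replace hf : MvPolynomial.IsHomogeneous f k := hf
      show pia I f ∈ _
      rw [f.as_sum, map_sum]
      refine Submodule.sum_mem _ fun d hd => ?_
      rw [pia_monomial]
      by_cases hstd : d ∈ stdS I
      · have hdeg : mdeg d = k := by
          rw [← mdeg_eq_weight]
          exact hf (MvPolynomial.mem_support_iff.mp hd)
        exact Submodule.smul_mem _ _
          (Submodule.subset_span ⟨d, (hmemFk d).mpr ⟨hstd, hdeg⟩, rfl⟩)
      · rw [pia_monomial_eq_zero I hstd, smul_zero]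
        exact Submodule.zero_mem _
    · rw [Submodule.span_le]
      rintro _ ⟨d, hdF, rfl⟩
      have hdeg : mdeg d = k := ((hmemFk d).mp hdF).2
      refine ⟨monomial d (1:K), ?_, rfl⟩
      exact isHomogeneous_monomial _ (by rw [mdeg_eq_degree, hdeg])
  have hrank : Module.finrank K
      (Submodule.span K ((fun d => pia I (monomial d (1:K))) '' (Fk : Set _))) = Fk.card := by
    have hinj : Function.Injective (fun d : {x // x ∈ Fk} =>
        (⟨d.1, ((hmemFk d.1).mp d.2).1⟩ : stdS I)) := by
      intro a b hab
      have h5 := congrArg Subtype.val hab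
      exact Subtype.ext h5
    have hind : LinearIndependent K
        (fun d : {x // x ∈ Fk} => pia I (monomial d.1 (1:K))) := by
      have := (mb I hmon).linearIndependent.comp _ hinj
      convert this using 1
      funext d
      rw [Function.comp_apply, mb_apply]
    have himg : (fun d => pia I (monomial d (1:K))) '' (Fk : Set _)
        = Set.range (fun d : {x // x ∈ Fk} => pia I (monomial d.1 (1:K))) := by
      exact Set.image_eq_range _ _
    rw [himg, finrank_span_eq_card hind, Fintype.card_coe]
  rw [hdim, hsub, hrank, hMSet, Set.ncard_coe_finset]

end hilbert

section main
variable {K : Type*} [Field K] {n : ℕ}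

theorem stmt11' (I : Ideal (MvPolynomial (Fin n) K))
    (hmon : IsMonomialIdeal I) [FiniteDimensional K (MvPolynomial (Fin n) K ⧸ I)] :
    SpernerAlg I ↔
      sSup {m | ∃ F : Finset (Fin n →₀ ℕ), (∀ d ∈ F, (monomial d (1 : K)) ∉ I) ∧
          IsAntichain (· ≤ ·) (F : Set (Fin n →₀ ℕ)) ∧ F.card = m}
        = sSup (Set.range fun k => (MSet K I k).ncard) := by
  classical
  set ACset : Set ℕ := {m | ∃ F : Finset (Fin n →₀ ℕ), (∀ d ∈ F, (monomial d (1 : K)) ∉ I) ∧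
      IsAntichain (· ≤ ·) (F : Set (Fin n →₀ ℕ)) ∧ F.card = m} with hAC
  set Muset : Set ℕ := {m | ∃ J : Ideal (MvPolynomial (Fin n) K ⧸ I), mu J = m} with hMu
  -- bounds
  have hACbdd : BddAbove ACset := by
    refine ⟨(stdS_finite I hmon).toFinset.card, ?_⟩
    rintro m ⟨F, hFstd, -, rfl⟩
    refine Finset.card_le_card fun d hd => ?_
    rw [Set.Finite.mem_toFinset]
    exact hFstd d hd
  have hmu_le : ∀ m ∈ Muset, ∃ k ∈ ACset, m ≤ k := by
    rintro m ⟨J, rfl⟩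
    obtain ⟨F, hFstd, hFac, hle⟩ := mu_le_antichain I hmon J
    exact ⟨F.card, ⟨F, hFstd, hFac, rfl⟩, hle⟩
  have hMubdd : BddAbove Muset := by
    obtain ⟨b, hb⟩ := hACbdd
    refine ⟨b, ?_⟩
    intro m hm
    obtain ⟨k, hk, hmk⟩ := hmu_le m hm
    exact le_trans hmk (hb hk)
  have hACne : ACset.Nonempty := by
    refine ⟨0, ∅, ?_, ?_, rfl⟩
    · intro d hd; exact absurd hd (Finset.notMem_empty d)
    · rw [Finset.coe_empty]; exact Set.pairwise_empty _
  have hMune : Muset.Nonempty := ⟨mu (⊥ : Ideal (MvPolynomial (Fin n) K ⧸ I)), ⊥, rfl⟩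
  -- the key equality
  have hkey : sSup Muset = sSup ACset := by
    apply le_antisymm
    · apply csSup_le hMune
      intro m hm
      obtain ⟨k, hk, hmk⟩ := hmu_le m hm
      exact le_trans hmk (le_csSup hACbdd hk)
    · apply csSup_le hACne
      rintro m ⟨F, hFstd, hFac, rfl⟩
      have h1 : F.card ≤ mu (Ideal.span ((fun d => pia I (monomial d (1:K))) '' (F : Set _))) :=
        antichain_le_mu I hmon hFstd hFac
      exact le_trans h1 (le_csSup hMubdd ⟨_, rfl⟩)
  have hfun : hdim K n I = fun k => (MSet K I k).ncard := funext (hdim_eq I hmon)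
  rw [SpernerAlg, hkey, hfun]
end main


/-- A monomial Artinian algebra `A = S/I` has the Sperner property if and only
if the divisibility poset of monomials outside `I` has the Sperner property
(the maximal size of an antichain equals the maximal size of a rank level). -/
theorem stmt11 {K : Type*} [Field K] {n : ℕ} (I : Ideal (MvPolynomial (Fin n) K))
    (hmon : IsMonomialIdeal I) [FiniteDimensional K (MvPolynomial (Fin n) K ⧸ I)] :
    SpernerAlg I ↔
      sSup {m | ∃ F : Finset (Fin n →₀ ℕ), (∀ d ∈ F, (monomial d (1 : K)) ∉ I) ∧
          IsAntichain (· ≤ ·) (F : Set (Fin n →₀ ℕ)) ∧ F.card = m}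
        = sSup (Set.range fun k => (MSet K I k).ncard) :=
  stmt11' I hmon
end
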